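/- Let (X,T) be a topological dynamical system, let U₀,U₁ ⊆ X and d ∈ ℕ. Enumerate {0,1}^d = {t^{(1)},…,t^{(2^d)}}, set m = d·2^d, and let (i₁,…,i_m) ∈ {0,1}^m be the concatenation of the tuples t^{(1)},t^{(2)},…,t^{(2^d)}. If n > 0 is such that T^{-n}U_{i₁} ∩ T^{-2n}U_{i₂} ∩ … ∩ T^{-mn}U_{i_m} ≠ ∅, then for every (t₁,…,t_d) ∈ {0,1}^d one has T^{-n}U_{t₁} ∩ T^{-2n}U_{t₂} ∩ … ∩ T^{-dn}U_{t_d} ≠ ∅. -/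
import Mathlib


/-- Let `(X, T)` be a t.d.s., `U₀, U₁ ⊆ X`, `d ∈ ℕ`, and enumerate
`{0,1}^d` by a bijection `e : Fin (2^d) ≃ (Fin d → Bool)`.  Let `(i_1, …, i_m)`,
`m = d · 2^d`, be the concatenation of the tuples `e 0, e 1, …`; that is, the entry at
(1-based) position `k·d + r + 1` (`k < 2^d`, `r < d`) is `e k r`.  If `n > 0` satisfies
`T^{-n} U_{i_1} ∩ T^{-2n} U_{i_2} ∩ … ∩ T^{-mn} U_{i_m} ≠ ∅`, then for every
`(t_1, …, t_d) ∈ {0,1}^d` one has `T^{-n} U_{t_1} ∩ … ∩ T^{-dn} U_{t_d} ≠ ∅`. -/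
theorem concatenated_ap_intersection {X : Type*} [MetricSpace X] [CompactSpace X]
    (T : Equiv.Perm X) (hT : Continuous T) (hT' : Continuous T.symm)
    (U₀ U₁ : Set X) (d : ℕ) (e : Fin (2 ^ d) ≃ (Fin d → Bool))
    (n : ℕ) (hn : 0 < n)
    (h : (⋂ k : Fin (2 ^ d), ⋂ r : Fin d,
      ⇑(T ^ ((((k : ℕ) * d + (r : ℕ) + 1) * n))) ⁻¹'
        (if e k r then U₁ else U₀)).Nonempty) :
    ∀ t : Fin d → Bool,
      (⋂ r : Fin d,
        ⇑(T ^ (((r : ℕ) + 1) * n)) ⁻¹' (if t r then U₁ else U₀)).Nonempty := by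
  intro t
  obtain ⟨x, hx⟩ := h
  set k := e.symm t with hk
  refine ⟨(T ^ ((k : ℕ) * d * n)) x, ?_⟩
  simp only [Set.mem_iInter, Set.mem_preimage] at hx ⊢
  intro r
  have hxk := hx k r
  rw [e.apply_symm_apply] at hxk
  have : ((k : ℕ) * d + (r : ℕ) + 1) * n = ((r : ℕ) + 1) * n + (k : ℕ) * d * n := by ring
  rw [this, pow_add] at hxk
  simpa using hxk
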